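/- arXiv:1807.02899 — 2 statements merged into one kernel-verified Lean document; each statement's English description precedes it below -/
import Mathlib

section
/- Let G be an (n, m) graph with adjacency eigenvalues λ_1 ≥ … ≥ λ_n. Then the spread S(G) = λ_1 - λ_n satisfies S(G) ≤ λ_1 + √(2m - λ_1²) ≤ 2√m. -/
open Matrix Polynomial BigOperators

noncomputable section

namespace SpreadPaper

variable {V : Type*}

/-- The adjacency matrix of a simple graph over `ℝ` (classical decidability). -/
noncomputable def adjMat (G : SimpleGraph V) : Matrix V V ℝ :=
  letI := Classical.decRel G.Adj
  G.adjMatrix ℝ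

lemma adjMat_isHermitian (G : SimpleGraph V) : (adjMat G).IsHermitian := by
  letI := Classical.decRel G.Adj
  ext i j
  simp [adjMat, Matrix.conjTranspose_apply, SimpleGraph.adjMatrix_apply, G.adj_comm]

/-- The degree of a vertex (classical decidability). -/
noncomputable def deg [Fintype V] (G : SimpleGraph V) (v : V) : ℕ :=
  letI := Classical.decRel G.Adj
  G.degree v

/-- The signless Laplacian matrix `D + A` of a graph. -/
noncomputable def signQ [Fintype V] [DecidableEq V] (G : SimpleGraph V) : Matrix V V ℝ :=
  Matrix.diagonal (fun v => (deg G v : ℝ)) + adjMat G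

lemma signQ_isHermitian [Fintype V] [DecidableEq V] (G : SimpleGraph V) :
    (signQ G).IsHermitian :=
  (Matrix.isHermitian_diagonal _).add (adjMat_isHermitian G)

/-- The Laplacian matrix `D - A` of a graph. -/
noncomputable def lap [Fintype V] [DecidableEq V] (G : SimpleGraph V) : Matrix V V ℝ :=
  Matrix.diagonal (fun v => (deg G v : ℝ)) - adjMat G

lemma lap_isHermitian [Fintype V] [DecidableEq V] (G : SimpleGraph V) :
    (lap G).IsHermitian :=
  (Matrix.isHermitian_diagonal _).sub (adjMat_isHermitian G)

/-- The largest eigenvalue of a Hermitian real matrix. -/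
noncomputable def maxEig {m : Type*} [Fintype m] [DecidableEq m] {A : Matrix m m ℝ}
    (hA : A.IsHermitian) : ℝ :=
  ⨆ i, hA.eigenvalues i

/-- The smallest eigenvalue of a Hermitian real matrix. -/
noncomputable def minEig {m : Type*} [Fintype m] [DecidableEq m] {A : Matrix m m ℝ}
    (hA : A.IsHermitian) : ℝ :=
  ⨅ i, hA.eigenvalues i

/-- The spread (largest minus smallest eigenvalue) of a Hermitian real matrix. -/
noncomputable def sprd {m : Type*} [Fintype m] [DecidableEq m] {A : Matrix m m ℝ}
    (hA : A.IsHermitian) : ℝ :=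
  maxEig hA - minEig hA

/-- `q` lists the eigenvalues of the Hermitian matrix `A` (with multiplicity) in
nonincreasing order. -/
def IsDescSpectrum {m : Type*} [Fintype m] [DecidableEq m] {A : Matrix m m ℝ}
    (hA : A.IsHermitian) {k : ℕ} (q : Fin k → ℝ) : Prop :=
  Antitone q ∧ ∃ e : Fin k ≃ m, ∀ i, q i = hA.eigenvalues (e i)

noncomputable instance edgeSetFintype [Fintype V] (G : SimpleGraph V) : Fintype G.edgeSet :=
  Set.Finite.fintype (Set.toFinite _)

/-- The number of edges of a graph. -/
noncomputable def numEdges (G : SimpleGraph V) : ℕ := Nat.card G.edgeSet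

/-- The total graph of `G`: vertices are the vertices and edges of `G`, with adjacency
given by adjacency in `G`, adjacency in the line graph, or vertex-edge incidence. -/
def totalGraph (G : SimpleGraph V) : SimpleGraph (V ⊕ G.edgeSet) where
  Adj x y :=
    match x, y with
    | Sum.inl u, Sum.inl v => G.Adj u v
    | Sum.inl u, Sum.inr e => u ∈ (e : Sym2 V)
    | Sum.inr e, Sum.inl u => u ∈ (e : Sym2 V)
    | Sum.inr e, Sum.inr f => e ≠ f ∧ ∃ v, v ∈ (e : Sym2 V) ∧ v ∈ (f : Sym2 V)
  symm := by
    constructor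
    rintro (u|e) (v|f) h
    · exact G.adj_symm h
    · exact h
    · exact h
    · exact ⟨h.1.symm, h.2.choose, h.2.choose_spec.2, h.2.choose_spec.1⟩
  loopless := by
    constructor
    rintro (u|e) h
    · exact G.loopless.irrefl u h
    · exact h.1 rfl

/-- The join `G ∨ H` of two graphs: all edges between the two vertex sets are added. -/
def joinG {α β : Type*} (G : SimpleGraph α) (H : SimpleGraph β) : SimpleGraph (α ⊕ β) where
  Adj x y :=
    match x, y with
    | Sum.inl a, Sum.inl b => G.Adj a b
    | Sum.inr a, Sum.inr b => H.Adj a b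
    | Sum.inl _, Sum.inr _ => True
    | Sum.inr _, Sum.inl _ => True
  symm := by
    constructor
    rintro (a|a) (b|b) h
    · exact G.adj_symm h
    · exact trivial
    · exact trivial
    · exact H.adj_symm h
  loopless := by
    constructor
    rintro (a|a) h
    · exact G.loopless.irrefl a h
    · exact H.loopless.irrefl a h

/-- The disjoint union of two graphs. -/
def dunion {α β : Type*} (G : SimpleGraph α) (H : SimpleGraph β) : SimpleGraph (α ⊕ β) where
  Adj x y :=
    match x, y with
    | Sum.inl a, Sum.inl b => G.Adj a b
    | Sum.inr a, Sum.inr b => H.Adj a b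
    | Sum.inl _, Sum.inr _ => False
    | Sum.inr _, Sum.inl _ => False
  symm := by
    constructor
    rintro (a|a) (b|b) h
    · exact G.adj_symm h
    · exact h.elim
    · exact h.elim
    · exact H.adj_symm h
  loopless := by
    constructor
    rintro (a|a) h
    · exact G.loopless.irrefl a h
    · exact H.loopless.irrefl a h

/-- `G` is `r`-regular. -/
def IsReg [Fintype V] (G : SimpleGraph V) (r : ℕ) : Prop := ∀ v, deg G v = r

/-- The minimum degree of a graph. -/
noncomputable def minDeg [Fintype V] (G : SimpleGraph V) : ℕ := sInf (Set.range (deg G))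

/-- The maximum degree of a graph. -/
noncomputable def maxDeg [Fintype V] (G : SimpleGraph V) : ℕ := sSup (Set.range (deg G))

/-- The first Zagreb index of a graph: the sum of the squares of the vertex degrees. -/
noncomputable def zagreb [Fintype V] (G : SimpleGraph V) : ℕ := ∑ v, (deg G v) ^ 2

/-- The vertex connectivity of `G` is at most `k`: some set of at most `k` vertices
disconnects `G`. -/
def HasConnLe (G : SimpleGraph V) (k : ℕ) : Prop :=
  ∃ U : Set V, Nat.card U ≤ k ∧ (Uᶜ).Nonempty ∧ ¬ (G.induce Uᶜ).Preconnected


lemma trace_eq_sum_eigs {n : Type*} [Fintype n] [DecidableEq n] {A : Matrix n n ℝ}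
    (hA : A.IsHermitian) : A.trace = ∑ i, hA.eigenvalues i := by
  conv_lhs => rw [hA.spectral_theorem, Unitary.conjStarAlgAut_apply]
  rw [Matrix.trace_mul_comm, ← Matrix.mul_assoc]
  have : (star (hA.eigenvectorUnitary : Matrix n n ℝ)) * (hA.eigenvectorUnitary : Matrix n n ℝ)
      = 1 := (Matrix.mem_unitaryGroup_iff').mp hA.eigenvectorUnitary.2
  rw [this, Matrix.one_mul, Matrix.trace_diagonal]
  simp

lemma trace_sq_eq_sum_sq {n : Type*} [Fintype n] [DecidableEq n] {A : Matrix n n ℝ}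
    (hA : A.IsHermitian) : (A * A).trace = ∑ i, hA.eigenvalues i ^ 2 := by
  conv_lhs => rw [hA.spectral_theorem, Unitary.conjStarAlgAut_apply]
  have hU : (star (hA.eigenvectorUnitary : Matrix n n ℝ)) * (hA.eigenvectorUnitary : Matrix n n ℝ)
      = 1 := (Matrix.mem_unitaryGroup_iff').mp hA.eigenvectorUnitary.2
  set U : Matrix n n ℝ := (hA.eigenvectorUnitary : Matrix n n ℝ)
  set D : Matrix n n ℝ := Matrix.diagonal (RCLike.ofReal ∘ hA.eigenvalues)
  have key : U * D * star U * (U * D * star U) = U * (D * D) * star U := by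
    have : U * D * star U * (U * D * star U) = U * D * (star U * U) * D * star U := by
      noncomm_ring
    rw [this, hU, Matrix.mul_one]
    noncomm_ring
  rw [key, Matrix.trace_mul_comm, ← Matrix.mul_assoc, hU, Matrix.one_mul,
    show D * D = Matrix.diagonal (fun i => hA.eigenvalues i ^ 2) by
      rw [Matrix.diagonal_mul_diagonal]; congr 1; ext i; simp [sq, D],
    Matrix.trace_diagonal]

/-- `S(G) ≤ λ₁ + √(2m - λ₁²) ≤ 2√m`. -/
theorem spread_le {V : Type*} [Fintype V] [DecidableEq V] [Nonempty V] (G : SimpleGraph V) :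
    sprd (adjMat_isHermitian G) ≤
        maxEig (adjMat_isHermitian G) +
          Real.sqrt (2 * (numEdges G : ℝ) - (maxEig (adjMat_isHermitian G)) ^ 2) ∧
      maxEig (adjMat_isHermitian G) +
          Real.sqrt (2 * (numEdges G : ℝ) - (maxEig (adjMat_isHermitian G)) ^ 2) ≤
        2 * Real.sqrt (numEdges G : ℝ) := by
  classical
  set hH := adjMat_isHermitian G
  set lam := hH.eigenvalues with hlam
  set mu := maxEig hH with hmu
  set nu := minEig hH with hnu
  -- sup/inf are attained
  obtain ⟨i, hi⟩ := Finite.exists_max lam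
  obtain ⟨j, hj⟩ := Finite.exists_min lam
  have hmui : mu = lam i :=
    le_antisymm (ciSup_le hi) (le_ciSup (Set.Finite.bddAbove (Set.finite_range _)) i)
  have hnuj : nu = lam j :=
    le_antisymm (ciInf_le (Set.Finite.bddBelow (Set.finite_range _)) j) (le_ciInf hj)
  -- sum of eigenvalues is 0
  have hsum0 : ∑ k, lam k = 0 := by
    have := trace_eq_sum_eigs hH
    rw [show (adjMat G).trace = 0 by
      letI := Classical.decRel G.Adj
      simpa [adjMat] using SimpleGraph.trace_adjMatrix G ℝ] at this
    linarith [this]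
  -- sum of squares is 2m
  have h2m : ∑ k, lam k ^ 2 = 2 * (numEdges G : ℝ) := by
    have h1 := trace_sq_eq_sum_sq hH
    letI := Classical.decRel G.Adj
    have h2 : (adjMat G * adjMat G).trace = ∑ v, (G.degree v : ℝ) := by
      simp only [Matrix.trace, Matrix.diag]
      refine Finset.sum_congr rfl fun v _ => ?_
      simpa [adjMat] using SimpleGraph.adjMatrix_mul_self_apply_self (α := ℝ) G v
    have h3 : ∑ v, (G.degree v : ℝ) = 2 * (numEdges G : ℝ) := by
      have := SimpleGraph.sum_degrees_eq_twice_card_edges G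
      have hcard : numEdges G = (@SimpleGraph.edgeFinset V G G.fintypeEdgeSet).card := by
        rw [numEdges, Nat.card_coe_set_eq, SimpleGraph.edgeFinset]
        exact @Set.ncard_eq_toFinset_card' _ _ G.fintypeEdgeSet
      rw [hcard]
      exact_mod_cast congrArg (Nat.cast : ℕ → ℝ) this
    rw [← h1, h2, h3]
  have hmu0 : 0 ≤ mu := by
    by_contra h
    push_neg at h
    have : ∑ k, lam k < 0 := by
      have : ∀ k, lam k ≤ mu := fun k => hmui ▸ hi k
      calc ∑ k, lam k ≤ ∑ _k : V, mu := Finset.sum_le_sum fun k _ => this k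
        _ < 0 := by
            rw [Finset.sum_const, nsmul_eq_mul]
            have : 0 < Fintype.card V := Fintype.card_pos
            exact mul_neg_of_pos_of_neg (by exact_mod_cast this) h
    linarith [hsum0]
  have hnu0 : nu ≤ 0 := by
    by_contra h
    push_neg at h
    have : 0 < ∑ k, lam k := by
      have : ∀ k, nu ≤ lam k := fun k => hnuj ▸ hj k
      calc (0:ℝ) < ∑ _k : V, nu := by
            rw [Finset.sum_const, nsmul_eq_mul]
            have : 0 < Fintype.card V := Fintype.card_pos
            exact mul_pos (by exact_mod_cast this) h
        _ ≤ ∑ k, lam k := Finset.sum_le_sum fun k _ => this k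
    linarith [hsum0]
  have hmusq : mu ^ 2 ≤ 2 * (numEdges G : ℝ) := by
    rw [← h2m, hmui]
    exact Finset.single_le_sum (f := fun k => lam k ^ 2) (fun k _ => sq_nonneg _) (Finset.mem_univ i)
  have hnusq : nu ^ 2 ≤ 2 * (numEdges G : ℝ) - mu ^ 2 := by
    rcases eq_or_ne mu nu with heq | hne
    · have h0 : nu = 0 := le_antisymm hnu0 (heq ▸ hmu0)
      rw [h0]
      simpa using hmusq
    · have hij : i ≠ j := by
        intro h; exact hne (by rw [hmui, hnuj, h])
      have : mu ^ 2 + nu ^ 2 ≤ ∑ k, lam k ^ 2 := by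
        rw [hmui, hnuj]
        have h5 : ∑ k ∈ ({i, j} : Finset V), lam k ^ 2 ≤ ∑ k, lam k ^ 2 :=
          Finset.sum_le_sum_of_subset_of_nonneg (Finset.subset_univ _)
            (fun k _ _ => sq_nonneg (lam k))
        rwa [Finset.sum_pair hij] at h5
      linarith [h2m ▸ this]
  have hb0 : (0:ℝ) ≤ 2 * (numEdges G : ℝ) - mu ^ 2 := by linarith [sq_nonneg nu, hnusq]
  have hm0 : (0:ℝ) ≤ (numEdges G : ℝ) := Nat.cast_nonneg _
  constructor
  · have : -nu ≤ Real.sqrt (2 * (numEdges G : ℝ) - mu ^ 2) := by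
      have h1 : -nu ≤ Real.sqrt (nu ^ 2) := by
        rw [Real.sqrt_sq_eq_abs]; exact neg_le_abs nu
      exact h1.trans (Real.sqrt_le_sqrt hnusq)
    rw [sprd]
    linarith [this]
  · set b := Real.sqrt (2 * (numEdges G : ℝ) - mu ^ 2) with hb
    have hbsq : b ^ 2 = 2 * (numEdges G : ℝ) - mu ^ 2 := Real.sq_sqrt hb0
    have hbnn : 0 ≤ b := Real.sqrt_nonneg _
    have hcsq : (Real.sqrt (numEdges G : ℝ)) ^ 2 = (numEdges G : ℝ) := Real.sq_sqrt hm0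
    have hcnn : 0 ≤ Real.sqrt (numEdges G : ℝ) := Real.sqrt_nonneg _
    nlinarith [sq_nonneg (mu - b), sq_nonneg (mu + b - 2 * Real.sqrt (numEdges G : ℝ)),
      sq_nonneg (mu + b + 2 * Real.sqrt (numEdges G : ℝ))]

end SpreadPaper
end
end

section
/- Let G be a connected graph on n vertices with m edges. Then the signless Laplacian spread of the total graph satisfies S_Q(T(G)) ≥ 2√((3m/n - Z_g(G)/m)² + 10m/n - 2Z_g(G)/m + 1), where Z_g(G) is the first Zagreb index of G. -/
open Matrix Polynomial BigOperators

noncomputable section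

namespace SpreadPaper

variable {V : Type*}

set_option linter.unusedSectionVars false

section Aux

lemma adjMat_apply' {W : Type*} (H : SimpleGraph W) [inst : DecidableRel H.Adj] (p q : W) :
    adjMat H p q = if H.Adj p q then 1 else 0 := by
  have h : Classical.decRel H.Adj = inst := Subsingleton.elim _ _
  simp only [adjMat, h, SimpleGraph.adjMatrix_apply]
  split_ifs <;> rfl

lemma rowsum {W : Type*} [Fintype W] (H : SimpleGraph W) (p : W) :
    ∑ q, adjMat H p q = (deg H p : ℝ) := by
  classical
  simp only [adjMat_apply' (inst := Classical.decRel H.Adj)]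
  rw [Finset.sum_boole]
  unfold deg
  congr 1
  rw [SimpleGraph.degree]
  congr 1
  ext q
  simp

variable [Fintype V] [DecidableEq V] (G : SimpleGraph V)

lemma sum_deg : (∑ v, (deg G v : ℝ)) = 2 * (numEdges G : ℝ) := by
  letI := Classical.decRel G.Adj
  have h : ∑ v, G.degree v = 2 * (@SimpleGraph.edgeFinset V G G.fintypeEdgeSet).card :=
    G.sum_degrees_eq_twice_card_edges
  have h2 : (@SimpleGraph.edgeFinset V G G.fintypeEdgeSet).card = numEdges G := by
    rw [@SimpleGraph.edgeFinset_card V G G.fintypeEdgeSet, numEdges,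
      @Nat.card_eq_fintype_card _ G.fintypeEdgeSet]
  unfold deg
  rw [← h2, ← Nat.cast_sum]
  rw [h]
  push_cast
  ring

lemma sum_mem_edge (e : G.edgeSet) : (∑ v : V, (if v ∈ (e : Sym2 V) then (1:ℝ) else 0)) = 2 := by
  obtain ⟨e, he⟩ := e
  induction e with
  | _ u w =>
    rw [SimpleGraph.mem_edgeSet] at he
    have hne : u ≠ w := he.ne
    have : ∀ v : V, (if v ∈ (s(u,w) : Sym2 V) then (1:ℝ) else 0)
        = (if v = u then 1 else 0) + (if v = w then 1 else 0) := by
      intro v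
      by_cases h1 : v = u <;> by_cases h2 : v = w <;>
        simp_all [Sym2.mem_iff]
    simp only [this, Finset.sum_add_distrib, Finset.sum_ite_eq', Finset.mem_univ, if_pos]
    norm_num

set_option linter.unusedSectionVars false

lemma sum_edges_mem (v : V) :
    (∑ e : G.edgeSet, (if v ∈ (e : Sym2 V) then (1:ℝ) else 0)) = (deg G v : ℝ) := by
  letI := Classical.decRel G.Adj
  rw [Finset.sum_boole]
  congr 1
  rw [show deg G v = G.degree v from rfl, ← SimpleGraph.card_incidenceFinset_eq_degree]
  apply Finset.card_bij (fun (e : G.edgeSet) _ => (e : Sym2 V))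
  · rintro ⟨e, he⟩ hmem
    rw [Finset.mem_filter] at hmem
    rw [SimpleGraph.mem_incidenceFinset]
    exact ⟨he, hmem.2⟩
  · rintro e₁ _ e₂ _ h
    exact Subtype.ext h
  · intro e he
    rw [SimpleGraph.mem_incidenceFinset] at he
    exact ⟨⟨e, he.1⟩, Finset.mem_filter.2 ⟨Finset.mem_univ _, he.2⟩, rfl⟩

lemma card_edges_real : (∑ _e : G.edgeSet, (1:ℝ)) = (numEdges G : ℝ) := by
  rw [Finset.sum_const, numEdges, Nat.card_eq_fintype_card]
  simp [Finset.card_univ]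

lemma line_uniq {e f : G.edgeSet} (hef : e ≠ f) {v w : V}
    (hv1 : v ∈ (e : Sym2 V)) (hv2 : v ∈ (f : Sym2 V))
    (hw1 : w ∈ (e : Sym2 V)) (hw2 : w ∈ (f : Sym2 V)) : v = w := by
  by_contra hvw
  have he2 : (e : Sym2 V) = s(v, w) := (Sym2.mem_and_mem_iff hvw).1 ⟨hv1, hw1⟩
  have hf2 : (f : Sym2 V) = s(v, w) := (Sym2.mem_and_mem_iff hvw).1 ⟨hv2, hw2⟩
  exact hef (Subtype.ext (he2.trans hf2.symm))

lemma line_ind (e f : G.edgeSet) :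
    (if (e ≠ f ∧ ∃ v, v ∈ (e : Sym2 V) ∧ v ∈ (f : Sym2 V)) then (1:ℝ) else 0)
      = (∑ v, (if v ∈ (e : Sym2 V) then (1:ℝ) else 0) * (if v ∈ (f : Sym2 V) then (1:ℝ) else 0))
        - (if e = f then 2 else 0) := by
  by_cases hef : e = f
  · subst hef
    have h2 : ∀ v : V, (if v ∈ (e : Sym2 V) then (1:ℝ) else 0) * (if v ∈ (e : Sym2 V) then (1:ℝ) else 0)
        = (if v ∈ (e : Sym2 V) then (1:ℝ) else 0) := by
      intro v; by_cases h : v ∈ (e : Sym2 V) <;> simp [h]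
    simp only [h2, sum_mem_edge]
    simp
  · rw [if_neg hef, sub_zero]
    by_cases hex : ∃ v, v ∈ (e : Sym2 V) ∧ v ∈ (f : Sym2 V)
    · rw [if_pos ⟨hef, hex⟩]
      obtain ⟨v0, hv0e, hv0f⟩ := hex
      have h2 : ∀ v : V, (if v ∈ (e : Sym2 V) then (1:ℝ) else 0) * (if v ∈ (f : Sym2 V) then (1:ℝ) else 0)
          = (if v = v0 then 1 else 0) := by
        intro v
        by_cases h1 : v ∈ (e : Sym2 V) <;> by_cases hf1 : v ∈ (f : Sym2 V)
        · rw [if_pos h1, if_pos hf1, if_pos (line_uniq G hef h1 hf1 hv0e hv0f)]; ring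
        · rw [if_pos h1, if_neg hf1, if_neg (by rintro rfl; exact hf1 hv0f)]; ring
        · rw [if_neg h1, if_pos hf1, if_neg (by rintro rfl; exact h1 hv0e)]; ring
        · rw [if_neg h1, if_neg hf1, if_neg (by rintro rfl; exact h1 hv0e)]; ring
      rw [Finset.sum_congr rfl (fun v _ => h2 v), Finset.sum_ite_eq' Finset.univ v0,
        if_pos (Finset.mem_univ _)]
    · rw [if_neg (fun h => hex h.2)]
      symm
      apply Finset.sum_eq_zero
      intro v _
      by_cases h1 : v ∈ (e : Sym2 V)
      · by_cases hf1 : v ∈ (f : Sym2 V)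
        · exact absurd ⟨v, h1, hf1⟩ hex
        · simp [hf1]
      · simp [h1]

lemma sum_zagreb : (∑ v, ((deg G v : ℝ))^2) = (zagreb G : ℝ) := by
  rw [zagreb]
  push_cast
  rfl

lemma sum_line :
    (∑ e : G.edgeSet, ∑ f : G.edgeSet,
        (if (e ≠ f ∧ ∃ v, v ∈ (e : Sym2 V) ∧ v ∈ (f : Sym2 V)) then (1:ℝ) else 0))
      = (zagreb G : ℝ) - 2 * (numEdges G : ℝ) := by
  simp only [line_ind]
  rw [Finset.sum_congr rfl (fun e _ => Finset.sum_sub_distrib _ _), Finset.sum_sub_distrib]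
  have h1 : (∑ e : G.edgeSet, ∑ f : G.edgeSet, (if e = f then (2:ℝ) else 0))
      = 2 * (numEdges G : ℝ) := by
    have : ∀ e : G.edgeSet, (∑ f : G.edgeSet, (if e = f then (2:ℝ) else 0)) = 2 := by
      intro e
      rw [Finset.sum_ite_eq Finset.univ e (fun _ => (2:ℝ)), if_pos (Finset.mem_univ _)]
    rw [Finset.sum_congr rfl (fun e _ => this e)]
    have := card_edges_real G
    rw [Finset.sum_const] at *
    rw [← this]
    simp [mul_comm]
  have h2 : (∑ e : G.edgeSet, ∑ f : G.edgeSet, ∑ v,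
      (if v ∈ (e : Sym2 V) then (1:ℝ) else 0) * (if v ∈ (f : Sym2 V) then (1:ℝ) else 0))
      = (zagreb G : ℝ) := by
    rw [Finset.sum_congr rfl (fun e _ => Finset.sum_comm), Finset.sum_comm]
    have : ∀ v : V, (∑ e : G.edgeSet, ∑ f : G.edgeSet,
        (if v ∈ (e : Sym2 V) then (1:ℝ) else 0) * (if v ∈ (f : Sym2 V) then (1:ℝ) else 0))
        = ((deg G v : ℝ))^2 := by
      intro v
      rw [← Finset.sum_mul_sum, sum_edges_mem, pow_two]
    rw [Finset.sum_congr rfl (fun v _ => this v), sum_zagreb]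
  rw [h1, h2]


open Classical in
lemma rowsum_ite (u : V) : (∑ v, if G.Adj u v then (1:ℝ) else 0) = (deg G u : ℝ) := by
  classical
  rw [← rowsum G u]
  exact Finset.sum_congr rfl fun v _ => (adjMat_apply' G u v).symm

open Classical in
lemma adjT_inl_inl (u v : V) :
    adjMat (totalGraph G) (Sum.inl u) (Sum.inl v) = if G.Adj u v then 1 else 0 := by
  classical
  rw [adjMat_apply']
  exact if_congr Iff.rfl rfl rfl

lemma adjT_inl_inr (v : V) (e : G.edgeSet) :
    adjMat (totalGraph G) (Sum.inl v) (Sum.inr e) = if v ∈ (e : Sym2 V) then 1 else 0 := by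
  classical
  rw [adjMat_apply']
  exact if_congr Iff.rfl rfl rfl

lemma adjT_inr_inl (v : V) (e : G.edgeSet) :
    adjMat (totalGraph G) (Sum.inr e) (Sum.inl v) = if v ∈ (e : Sym2 V) then 1 else 0 := by
  classical
  rw [adjMat_apply']
  exact if_congr Iff.rfl rfl rfl

lemma adjT_inr_inr (e f : G.edgeSet) :
    adjMat (totalGraph G) (Sum.inr e) (Sum.inr f)
      = if (e ≠ f ∧ ∃ v, v ∈ (e : Sym2 V) ∧ v ∈ (f : Sym2 V)) then 1 else 0 := by
  classical
  rw [adjMat_apply']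
  exact if_congr Iff.rfl rfl rfl

lemma degT_inl (v : V) :
    (deg (totalGraph G) (Sum.inl v) : ℝ) = 2 * (deg G v : ℝ) := by
  rw [← rowsum, Fintype.sum_sum_type]
  simp only [adjT_inl_inl, adjT_inl_inr]
  rw [rowsum_ite, sum_edges_mem]
  ring

lemma degT_inr (e : G.edgeSet) :
    (deg (totalGraph G) (Sum.inr e) : ℝ)
      = 2 + ∑ f : G.edgeSet,
          (if (e ≠ f ∧ ∃ v, v ∈ (e : Sym2 V) ∧ v ∈ (f : Sym2 V)) then (1:ℝ) else 0) := by
  rw [← rowsum, Fintype.sum_sum_type]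
  simp only [adjT_inr_inl, adjT_inr_inr]
  rw [sum_mem_edge]

lemma quad_eval (s t : ℝ) :
    (Sum.elim (fun _ : V => s) (fun _ : G.edgeSet => t)) ⬝ᵥ
        (signQ (totalGraph G) *ᵥ Sum.elim (fun _ : V => s) (fun _ : G.edgeSet => t))
      = 6 * (numEdges G : ℝ) * s^2 + 4 * (numEdges G : ℝ) * s * t
        + (2 * (zagreb G : ℝ) - 2 * (numEdges G : ℝ)) * t^2 := by
  classical
  set x : (V ⊕ G.edgeSet) → ℝ := Sum.elim (fun _ => s) (fun _ => t) with hxdef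
  set M : ℝ := (numEdges G : ℝ)
  set Z : ℝ := (zagreb G : ℝ)
  have hmulVec_inl : ∀ v : V, (adjMat (totalGraph G) *ᵥ x) (Sum.inl v)
      = (deg G v : ℝ) * s + (deg G v : ℝ) * t := by
    intro v
    show (∑ q, adjMat (totalGraph G) (Sum.inl v) q * x q) = _
    rw [Fintype.sum_sum_type]
    simp only [adjT_inl_inl, adjT_inl_inr, hxdef, Sum.elim_inl, Sum.elim_inr]
    rw [← Finset.sum_mul, ← Finset.sum_mul, rowsum_ite, sum_edges_mem]
  have hmulVec_inr : ∀ e : G.edgeSet, (adjMat (totalGraph G) *ᵥ x) (Sum.inr e)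
      = 2 * s + (∑ f : G.edgeSet,
          (if (e ≠ f ∧ ∃ v, v ∈ (e : Sym2 V) ∧ v ∈ (f : Sym2 V)) then (1:ℝ) else 0)) * t := by
    intro e
    show (∑ q, adjMat (totalGraph G) (Sum.inr e) q * x q) = _
    rw [Fintype.sum_sum_type]
    simp only [adjT_inr_inl, adjT_inr_inr, hxdef, Sum.elim_inl, Sum.elim_inr]
    rw [← Finset.sum_mul, ← Finset.sum_mul, sum_mem_edge]
  have hdiag : x ⬝ᵥ (Matrix.diagonal (fun p => (deg (totalGraph G) p : ℝ)) *ᵥ x)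
      = 4 * M * s^2 + Z * t^2 := by
    rw [dotProduct]
    have : ∀ p, x p * (Matrix.diagonal (fun p => (deg (totalGraph G) p : ℝ)) *ᵥ x) p
        = (deg (totalGraph G) p : ℝ) * (x p)^2 := by
      intro p
      rw [Matrix.mulVec_diagonal]
      ring
    rw [Finset.sum_congr rfl fun p _ => this p, Fintype.sum_sum_type]
    have h1 : (∑ v : V, (deg (totalGraph G) (Sum.inl v) : ℝ) * (x (Sum.inl v))^2)
        = 4 * M * s^2 := by
      simp only [degT_inl, hxdef, Sum.elim_inl]
      rw [← Finset.sum_mul, ← Finset.mul_sum, sum_deg]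
      ring
    have h2 : (∑ e : G.edgeSet, (deg (totalGraph G) (Sum.inr e) : ℝ) * (x (Sum.inr e))^2)
        = Z * t^2 := by
      simp only [degT_inr, hxdef, Sum.elim_inr]
      rw [← Finset.sum_mul, Finset.sum_add_distrib, Finset.sum_const, sum_line]
      have hc : ((Fintype.card G.edgeSet : ℕ) : ℝ) = M := by
        have := card_edges_real G
        rw [Finset.sum_const, Finset.card_univ, nsmul_eq_mul, mul_one] at this
        exact this
      rw [Finset.card_univ, nsmul_eq_mul, hc]
      ring
    rw [h1, h2]
  have hadj : x ⬝ᵥ (adjMat (totalGraph G) *ᵥ x)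
      = 2 * M * s^2 + 4 * M * s * t + (Z - 2 * M) * t^2 := by
    rw [dotProduct, Fintype.sum_sum_type]
    have h1 : (∑ v : V, x (Sum.inl v) * (adjMat (totalGraph G) *ᵥ x) (Sum.inl v))
        = 2 * M * s^2 + 2 * M * s * t := by
      simp only [hmulVec_inl]
      simp only [hxdef, Sum.elim_inl]
      have : ∀ v : V, s * ((deg G v : ℝ) * s + (deg G v : ℝ) * t)
          = (deg G v : ℝ) * (s^2 + s*t) := by intro v; ring
      rw [Finset.sum_congr rfl fun v _ => this v, ← Finset.sum_mul, sum_deg]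
      ring
    have h2 : (∑ e : G.edgeSet, x (Sum.inr e) * (adjMat (totalGraph G) *ᵥ x) (Sum.inr e))
        = 2 * M * s * t + (Z - 2 * M) * t^2 := by
      simp only [hmulVec_inr]
      simp only [hxdef, Sum.elim_inr]
      have : ∀ e : G.edgeSet, t * (2 * s + (∑ f : G.edgeSet,
            (if (e ≠ f ∧ ∃ v, v ∈ (e : Sym2 V) ∧ v ∈ (f : Sym2 V)) then (1:ℝ) else 0)) * t)
          = (2 * s * t) * 1 + (∑ f : G.edgeSet,
            (if (e ≠ f ∧ ∃ v, v ∈ (e : Sym2 V) ∧ v ∈ (f : Sym2 V)) then (1:ℝ) else 0)) * t^2 := by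
        intro e; ring
      rw [Finset.sum_congr rfl fun e _ => this e, Finset.sum_add_distrib,
        ← Finset.mul_sum, card_edges_real, ← Finset.sum_mul, sum_line]
      ring
    rw [h1, h2]
    ring
  rw [signQ, Matrix.add_mulVec, dotProduct_add, hadj]
  rw [show (Matrix.diagonal fun v => (deg (totalGraph G) v : ℝ)) = Matrix.diagonal
    (fun p => (deg (totalGraph G) p : ℝ)) from rfl, hdiag]
  ring

lemma norm_eval (s t : ℝ) :
    (Sum.elim (fun _ : V => s) (fun _ : G.edgeSet => t)) ⬝ᵥ
        (Sum.elim (fun _ : V => s) (fun _ : G.edgeSet => t))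
      = (Fintype.card V : ℝ) * s^2 + (numEdges G : ℝ) * t^2 := by
  rw [dotProduct, Fintype.sum_sum_type]
  simp only [Sum.elim_inl, Sum.elim_inr]
  rw [Finset.sum_const, Finset.sum_const, Finset.card_univ, Finset.card_univ]
  have hc : (Fintype.card G.edgeSet : ℝ) = (numEdges G : ℝ) := by
    rw [numEdges, Nat.card_eq_fintype_card]
  rw [nsmul_eq_mul, nsmul_eq_mul, hc]
  ring

lemma rayleigh_aux {ι : Type*} [Fintype ι] [DecidableEq ι] {A : Matrix ι ι ℝ}
    (hA : A.IsHermitian) (x : ι → ℝ) :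
    ∃ y : ι → ℝ, x ⬝ᵥ (A *ᵥ x) = ∑ i, hA.eigenvalues i * (y i)^2 ∧
      x ⬝ᵥ x = ∑ i, (y i)^2 := by
  set U : Matrix ι ι ℝ := (hA.eigenvectorUnitary : Matrix ι ι ℝ) with hU
  have hst : star U = Uᵀ := Matrix.conjTranspose_eq_transpose_of_trivial U
  refine ⟨Uᵀ *ᵥ x, ?_, ?_⟩
  · conv_lhs => rw [hA.spectral_theorem, Unitary.conjStarAlgAut_apply, ← hU]
    rw [← Matrix.mulVec_mulVec, ← Matrix.mulVec_mulVec, hst,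
      Matrix.dotProduct_mulVec, ← Matrix.mulVec_transpose]
    simp [Matrix.mulVec_diagonal, dotProduct, Finset.mul_sum, pow_two, mul_assoc,
      mul_left_comm, mul_comm]
  · have h2 : U *ᵥ (Uᵀ *ᵥ x) = x := by
      rw [Matrix.mulVec_mulVec, ← hst]
      rw [show U * star U = 1 from hA.eigenvectorUnitary.2.2]
      exact Matrix.one_mulVec x
    calc x ⬝ᵥ x = x ⬝ᵥ (U *ᵥ (Uᵀ *ᵥ x)) := by rw [h2]
      _ = (x ᵥ* U) ⬝ᵥ (Uᵀ *ᵥ x) := Matrix.dotProduct_mulVec _ _ _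
      _ = (Uᵀ *ᵥ x) ⬝ᵥ (Uᵀ *ᵥ x) := by rw [← Matrix.mulVec_transpose]
      _ = ∑ i, ((Uᵀ *ᵥ x) i)^2 := by simp [dotProduct, pow_two]

lemma dot_le_max {ι : Type*} [Fintype ι] [DecidableEq ι] {A : Matrix ι ι ℝ}
    (hA : A.IsHermitian) (x : ι → ℝ) :
    x ⬝ᵥ (A *ᵥ x) ≤ maxEig hA * (x ⬝ᵥ x) := by
  obtain ⟨y, h1, h2⟩ := rayleigh_aux hA x
  rw [h1, h2, Finset.mul_sum]
  apply Finset.sum_le_sum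
  intro i _
  have hle : hA.eigenvalues i ≤ maxEig hA :=
    le_ciSup (Set.Finite.bddAbove (Set.finite_range _)) i
  nlinarith [sq_nonneg (y i)]

lemma min_le_dot {ι : Type*} [Fintype ι] [DecidableEq ι] {A : Matrix ι ι ℝ}
    (hA : A.IsHermitian) (x : ι → ℝ) :
    minEig hA * (x ⬝ᵥ x) ≤ x ⬝ᵥ (A *ᵥ x) := by
  obtain ⟨y, h1, h2⟩ := rayleigh_aux hA x
  rw [h1, h2, Finset.mul_sum]
  apply Finset.sum_le_sum
  intro i _
  have hle : minEig hA ≤ hA.eigenvalues i :=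
    ciInf_le (Set.Finite.bddBelow (Set.finite_range _)) i
  nlinarith [sq_nonneg (y i)]

lemma one_le_numEdges (hconn : G.Connected) (hn : 1 < Fintype.card V) :
    1 ≤ numEdges G := by
  obtain ⟨u, v, huv⟩ := Fintype.exists_pair_of_one_lt_card hn
  have hr : G.Reachable u v := hconn.preconnected u v
  have hne : G.edgeSet.Nonempty := by
    obtain ⟨w⟩ := hr
    cases w with
    | nil => exact absurd rfl huv
    | cons h p => exact ⟨_, (SimpleGraph.mem_edgeSet G).2 h⟩
  have : Nonempty G.edgeSet := hne.to_subtype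
  have : 0 < Nat.card G.edgeSet := Nat.card_pos
  exact this

end Aux

/-- lower bound for the signless Laplacian spread of the total graph. -/
theorem signless_spread_totalGraph_lower {V : Type*} [Fintype V] [DecidableEq V]
    (G : SimpleGraph V) (hconn : G.Connected) (hn : 1 < Fintype.card V) :
    2 * Real.sqrt ((3 * (numEdges G : ℝ) / (Fintype.card V : ℝ) -
          (zagreb G : ℝ) / (numEdges G : ℝ)) ^ 2 +
        10 * (numEdges G : ℝ) / (Fintype.card V : ℝ) -
        2 * (zagreb G : ℝ) / (numEdges G : ℝ) + 1) ≤
      sprd (signQ_isHermitian (totalGraph G)) := by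
  classical
  set n : ℝ := (Fintype.card V : ℝ) with hn0
  set M : ℝ := (numEdges G : ℝ) with hM0
  set Z : ℝ := (zagreb G : ℝ) with hZ0
  have hM1 : (1:ℝ) ≤ M := by
    rw [hM0]; exact_mod_cast one_le_numEdges G hconn hn
  have hMpos : (0:ℝ) < M := lt_of_lt_of_le one_pos hM1
  have hnpos : (0:ℝ) < n := by
    rw [hn0]
    exact_mod_cast Nat.lt_of_lt_of_le Nat.zero_lt_one hn.le
  have hMne : M ≠ 0 := ne_of_gt hMpos
  have hnne : n ≠ 0 := ne_of_gt hnpos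
  set inn : ℝ := (3 * M / n - Z / M) ^ 2 + 10 * M / n - 2 * Z / M + 1 with hinn0
  set h : ℝ := 3 * M / n + Z / M - 1 with hh0
  set g : ℝ := Real.sqrt inn with hg0
  have hinn_nonneg : (0:ℝ) ≤ inn := by
    have he : inn = (3 * M / n - Z / M + 1) ^ 2 + 4 * M / n := by rw [hinn0]; ring
    have h4 : (0:ℝ) ≤ 4 * M / n := div_nonneg (by linarith) (le_of_lt hnpos)
    rw [he]
    exact add_nonneg (sq_nonneg _) h4
  have hg2 : g ^ 2 = inn := Real.sq_sqrt hinn_nonneg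
  have hgnn : (0:ℝ) ≤ g := Real.sqrt_nonneg _
  have hhh : 2 * h * (n * M) = 6 * M * M + (2 * Z - 2 * M) * n := by
    rw [hh0]; field_simp; ring
  have hkey : (n * M) * inn = (n * M) * h ^ 2 - (6 * M * (2 * Z - 2 * M) - 4 * M * M) := by
    rw [hinn0, hh0]; field_simp; ring
  have hqp : n * M * (h + g) ^ 2 - (6 * M * M + (2 * Z - 2 * M) * n) * (h + g)
      + (6 * M * (2 * Z - 2 * M) - 4 * M * M) = 0 := by
    linear_combination (h + g) * hhh + hkey + (n * M) * hg2
  have hqm : n * M * (h - g) ^ 2 - (6 * M * M + (2 * Z - 2 * M) * n) * (h - g)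
      + (6 * M * (2 * Z - 2 * M) - 4 * M * M) = 0 := by
    linear_combination (h - g) * hhh + hkey + (n * M) * hg2
  have key : ∀ l : ℝ,
      (n * M * l ^ 2 - (6 * M * M + (2 * Z - 2 * M) * n) * l
        + (6 * M * (2 * Z - 2 * M) - 4 * M * M) = 0) →
      6 * M * (2 * M) ^ 2 + 4 * M * (2 * M) * (l * n - 6 * M)
          + (2 * Z - 2 * M) * (l * n - 6 * M) ^ 2
        = l * (n * (2 * M) ^ 2 + M * (l * n - 6 * M) ^ 2) := by
    intro l hql
    linear_combination (6 * M - n * l) * hql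
  have hxxpos : ∀ l : ℝ, 0 < n * (2 * M) ^ 2 + M * (l * n - 6 * M) ^ 2 := by
    intro l
    have h1 : 0 < n * (2 * M) ^ 2 := mul_pos hnpos (pow_pos (by linarith) 2)
    have h2 : 0 ≤ M * (l * n - 6 * M) ^ 2 := mul_nonneg hMpos.le (sq_nonneg _)
    linarith
  have hmax : (h + g) ≤ maxEig (signQ_isHermitian (totalGraph G)) := by
    have hray := dot_le_max (signQ_isHermitian (totalGraph G))
      (Sum.elim (fun _ : V => 2 * M) (fun _ : G.edgeSet => (h + g) * n - 6 * M))
    rw [quad_eval, norm_eval] at hray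
    rw [← hM0, ← hn0, ← hZ0] at hray
    rw [key (h + g) hqp] at hray
    exact le_of_mul_le_mul_right hray (hxxpos (h + g))
  have hmin : minEig (signQ_isHermitian (totalGraph G)) ≤ (h - g) := by
    have hray := min_le_dot (signQ_isHermitian (totalGraph G))
      (Sum.elim (fun _ : V => 2 * M) (fun _ : G.edgeSet => (h - g) * n - 6 * M))
    rw [quad_eval, norm_eval] at hray
    rw [← hM0, ← hn0, ← hZ0] at hray
    rw [key (h - g) hqm] at hray
    exact le_of_mul_le_mul_right hray (hxxpos (h - g))
  have hsprd : sprd (signQ_isHermitian (totalGraph G))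
      = maxEig (signQ_isHermitian (totalGraph G)) - minEig (signQ_isHermitian (totalGraph G)) :=
    rfl
  rw [hsprd]
  linarith

end SpreadPaper
end
end
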